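/- Let 1 ≤ i ≤ s and let a ∈ kℤ^n + ℤγ_1 + … + ℤγ_i. Then there exist integers α_1, …, α_n and β_1, …, β_i with 0 ≤ β_j ≤ k_j − 1 for all j = 1, …, i, such that a = Σ_{j=1}^{n} α_j·(k·u_j) + Σ_{j=1}^{i} β_j·γ_j. Moreover, if a ≥ Σ_{j=1}^{i}(k_j − 1)·γ_j in the componentwise order, then α_j ≥ 0 for all j = 1, …, n. -/

import Mathlib

def RepL (n : ℕ) (c : ℚ) (g : ℕ → Fin n → ℚ) (m : ℕ) (a : Fin n → ℚ) : Prop :=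
  ∃ (α : Fin n → ℤ) (β : ℕ → ℤ),
    a = (∑ j : Fin n, α j • Pi.single j c) + ∑ j ∈ Finset.Icc 1 m, β j • g j

lemma repL_zero (n : ℕ) (c : ℚ) (g : ℕ → Fin n → ℚ) (m : ℕ) : RepL n c g m 0 :=
  ⟨0, 0, by simp⟩

lemma repL_add {n : ℕ} {c : ℚ} {g : ℕ → Fin n → ℚ} {m : ℕ} {a b : Fin n → ℚ}
    (ha : RepL n c g m a) (hb : RepL n c g m b) : RepL n c g m (a + b) := by
  obtain ⟨α, β, rfl⟩ := ha
  obtain ⟨α', β', rfl⟩ := hb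
  refine ⟨α + α', β + β', ?_⟩
  simp only [Pi.add_apply, add_smul, Finset.sum_add_distrib]
  abel

lemma repL_neg {n : ℕ} {c : ℚ} {g : ℕ → Fin n → ℚ} {m : ℕ} {a : Fin n → ℚ}
    (ha : RepL n c g m a) : RepL n c g m (-a) := by
  obtain ⟨α, β, rfl⟩ := ha
  refine ⟨-α, -β, ?_⟩
  simp only [Pi.neg_apply, neg_smul, Finset.sum_neg_distrib]
  abel

lemma repL_zsmul {n : ℕ} {c : ℚ} {g : ℕ → Fin n → ℚ} {m : ℕ} {a : Fin n → ℚ}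
    (t : ℤ) (ha : RepL n c g m a) : RepL n c g m ((t : ℚ) • a) := by
  obtain ⟨α, β, rfl⟩ := ha
  refine ⟨t • α, t • β, ?_⟩
  simp only [Pi.smul_apply, smul_eq_mul, smul_add, Finset.smul_sum,
    Int.cast_smul_eq_zsmul ℚ, mul_smul]

lemma repL_mono {n : ℕ} {c : ℚ} {g : ℕ → Fin n → ℚ} {m m' : ℕ} (h : m ≤ m')
    {a : Fin n → ℚ} (ha : RepL n c g m a) : RepL n c g m' a := by
  obtain ⟨α, β, rfl⟩ := ha
  refine ⟨α, fun j => if j ≤ m then β j else 0, ?_⟩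
  congr 1
  rw [← Finset.sum_subset (Finset.Icc_subset_Icc_right h)]
  · exact Finset.sum_congr rfl fun x hx => by
      simp only [Finset.mem_Icc] at hx
      simp [hx.2]
  · intro x hx hnx
    simp only [Finset.mem_Icc] at hx hnx
    have hxm : ¬ x ≤ m := by omega
    simp [hxm]

lemma repL_sum {n : ℕ} {c : ℚ} {g : ℕ → Fin n → ℚ} {m : ℕ} {ι : Type*}
    (t : Finset ι) (f : ι → Fin n → ℚ) (h : ∀ x ∈ t, RepL n c g m (f x)) :
    RepL n c g m (∑ x ∈ t, f x) :=
  Finset.sum_induction f _ (fun _ _ => repL_add) (repL_zero n c g m) h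

lemma repL_single {n : ℕ} (c : ℚ) (g : ℕ → Fin n → ℚ) (m : ℕ) (j : Fin n) :
    RepL n c g m (Pi.single j c) := by
  refine ⟨Pi.single j 1, 0, ?_⟩
  simp [Pi.single_apply, ite_smul]

lemma repL_gam {n : ℕ} (c : ℚ) (g : ℕ → Fin n → ℚ) {m j : ℕ} (h1 : 1 ≤ j) (h2 : j ≤ m) :
    RepL n c g m (g j) := by
  refine ⟨0, fun t => if t = j then 1 else 0, ?_⟩
  simp [ite_smul, Finset.mem_Icc, h1, h2]

lemma repL_intvec {n : ℕ} (c : ℚ) (g : ℕ → Fin n → ℚ) (m : ℕ) (v : Fin n → ℤ) :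
    RepL n c g m (fun l => (v l : ℚ) * c) := by
  refine ⟨v, 0, ?_⟩
  funext t
  simp [Finset.sum_apply, Pi.single_apply, smul_ite, Finset.sum_ite_eq]

lemma memClosure_rep {n m : ℕ} (lam : ℕ → Fin n → ℚ) {x : Fin n → ℚ}
    (hx : x ∈ AddSubgroup.closure
      ({x : Fin n → ℚ | ∃ v : Fin n → ℤ, x = fun j => (v j : ℚ)} ∪ (lam '' Set.Icc 1 m))) :
    ∃ (v : Fin n → ℤ) (cc : ℕ → ℤ),
      x = (fun l => (v l : ℚ)) + ∑ l ∈ Finset.Icc 1 m, cc l • lam l := by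
  induction hx using AddSubgroup.closure_induction with
  | mem x hx =>
    rcases hx with hv | ⟨l, hl, rfl⟩
    · obtain ⟨v, rfl⟩ := hv
      exact ⟨v, 0, by simp⟩
    · refine ⟨0, fun t => if t = l then 1 else 0, ?_⟩
      have hl' : l ∈ Finset.Icc 1 m := by
        simp only [Finset.mem_Icc]; exact ⟨hl.1, hl.2⟩
      simp only [ite_smul, one_smul, zero_smul, Finset.sum_ite_eq', hl', if_pos]
      funext t; simp
  | zero => exact ⟨0, 0, by funext t; simp⟩
  | add x y hx hy ihx ihy =>
    obtain ⟨v, cc, rfl⟩ := ihx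
    obtain ⟨v', cc', rfl⟩ := ihy
    refine ⟨v + v', cc + cc', ?_⟩
    have hvv : (fun l => (((v + v') l : ℤ) : ℚ)) = (fun l => (v l : ℚ)) + fun l => (v' l : ℚ) := by
      funext t; simp
    rw [hvv]
    simp only [Pi.add_apply, add_smul, Finset.sum_add_distrib]
    abel
  | neg x hx ihx =>
    obtain ⟨v, cc, rfl⟩ := ihx
    refine ⟨-v, -cc, ?_⟩
    have hvv : (fun l => (((-v) l : ℤ) : ℚ)) = -fun l => (v l : ℚ) := by
      funext t; simp
    rw [hvv]
    simp only [Pi.neg_apply, neg_smul, Finset.sum_neg_distrib]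
    abel

theorem stmt_3
    (n s : ℕ) (hn : 1 ≤ n) (hs : 1 ≤ s)
    (lam : ℕ → (Fin n → ℚ))
    (hlam_nonneg : ∀ i, 1 ≤ i → i ≤ s → 0 ≤ lam i)
    (hlam_mono : ∀ i, 1 ≤ i → i < s → lam i < lam (i + 1))
    (M : ℕ → AddSubgroup (Fin n → ℚ))
    (hM : ∀ i, M i = AddSubgroup.closure
      ({x : Fin n → ℚ | ∃ v : Fin n → ℤ, x = fun j => (v j : ℚ)} ∪ (lam '' Set.Icc 1 i)))
    (hlamM : ∀ i, 1 ≤ i → i ≤ s → lam i ∉ M (i - 1))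
    (kk : ℕ → ℕ)
    (hkk : ∀ i, 1 ≤ i → i ≤ s →
      IsLeast {m : ℕ | 0 < m ∧ (m : ℚ) • lam i ∈ M (i - 1)} (kk i))
    (e : ℕ → ℕ) (he0 : e 0 = 1)
    (he : ∀ i, 1 ≤ i → i ≤ s → e i = kk i * e (i - 1))
    (gam : ℕ → ℕ → (Fin n → ℚ))
    (hgam1 : ∀ i, 1 ≤ i → i ≤ s → gam i 1 = (e i : ℚ) • lam 1)
    (hgam : ∀ i, 1 ≤ i → i ≤ s → ∀ j, 1 ≤ j → j ≤ i - 1 →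
      gam i (j + 1) =
        (kk j : ℚ) • gam i j - (e i : ℚ) • lam j + (e i : ℚ) • lam (j + 1)) :
    ∀ i, 1 ≤ i → i ≤ s →
      ∀ a ∈ AddSubgroup.closure
        ((Set.range fun j : Fin n => Pi.single j (e s : ℚ)) ∪ (gam s '' Set.Icc 1 i)),
      ∃ (α : Fin n → ℤ) (β : ℕ → ℤ),
        (∀ j ∈ Finset.Icc 1 i, 0 ≤ β j ∧ β j ≤ (kk j : ℤ) - 1) ∧
        a = (∑ j : Fin n, α j • Pi.single j (e s : ℚ)) +
            ∑ j ∈ Finset.Icc 1 i, β j • gam s j ∧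
        ((∑ j ∈ Finset.Icc 1 i, ((kk j : ℚ) - 1) • gam s j) ≤ a → ∀ j, 0 ≤ α j) := by
  have hkkpos : ∀ j, 1 ≤ j → j ≤ s → 0 < kk j := fun j h1 h2 => (hkk j h1 h2).1.1
  have hepos : ∀ m, m ≤ s → 0 < e m := by
    intro m
    induction m with
    | zero => intro _; rw [he0]; omega
    | succ m ih =>
      intro h
      rw [he (m + 1) (by omega) h]
      simp only [Nat.add_sub_cancel]
      exact Nat.mul_pos (hkkpos (m + 1) (by omega) h) (ih (by omega))
  have hespos : (0 : ℚ) < (e s : ℚ) := by exact_mod_cast hepos s le_rfl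
  have hgamnn : ∀ j, 1 ≤ j → j ≤ s → ∀ t, 0 ≤ gam s j t := by
    intro j hj
    induction j, hj using Nat.le_induction with
    | base =>
      intro _ t
      rw [hgam1 s hs le_rfl]
      have h1 := Pi.le_def.mp (hlam_nonneg 1 le_rfl hs) t
      simp only [Pi.zero_apply] at h1
      simp only [Pi.smul_apply, smul_eq_mul]
      positivity
    | succ j hj ih =>
      intro hjs t
      rw [hgam s hs le_rfl j hj (by omega)]
      have h1 := ih (by omega) t
      have h2 := Pi.le_def.mp (hlam_mono j hj (by omega)).le t
      simp only [Pi.add_apply, Pi.sub_apply, Pi.smul_apply, smul_eq_mul]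
      have h3 : (0:ℚ) ≤ (kk j : ℚ) * gam s j t := mul_nonneg (by positivity) h1
      have h4 : (0:ℚ) ≤ (e s : ℚ) * (lam (j+1) t - lam j t) :=
        mul_nonneg (by positivity) (by linarith)
      nlinarith [h3, h4]
  have hD : ∀ j, 1 ≤ j → j ≤ s →
      RepL n (e s : ℚ) (gam s) (j - 1) (gam s j - (e s : ℚ) • lam j) := by
    intro j hj
    induction j, hj using Nat.le_induction with
    | base =>
      intro _
      rw [hgam1 s hs le_rfl, sub_self]
      exact repL_zero _ _ _ _
    | succ j hj ih =>
      intro hjs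
      have hkey : gam s (j+1) - (e s : ℚ) • lam (j+1)
          = (gam s j - (e s : ℚ) • lam j) + (((kk j : ℤ) - 1 : ℤ) : ℚ) • gam s j := by
        rw [hgam s hs le_rfl j hj (by omega)]
        push_cast
        module
      rw [show j + 1 - 1 = j from rfl, hkey]
      exact repL_add (repL_mono (by omega) (ih (by omega)))
        (repL_zsmul _ (repL_gam _ _ hj le_rfl))
  have hA : ∀ j, 1 ≤ j → j ≤ s → RepL n (e s : ℚ) (gam s) j ((e s : ℚ) • lam j) := by
    intro j h1 h2
    have hkey : (e s : ℚ) • lam j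
        = gam s j + ((-1 : ℤ) : ℚ) • (gam s j - (e s : ℚ) • lam j) := by
      push_cast
      module
    rw [hkey]
    exact repL_add (repL_gam _ _ h1 le_rfl)
      (repL_zsmul _ (repL_mono (by omega) (hD j h1 h2)))
  have hB : ∀ j, 1 ≤ j → j ≤ s →
      RepL n (e s : ℚ) (gam s) (j - 1) ((kk j : ℚ) • gam s j) := by
    intro j h1 h2
    have hmem : ((kk j : ℕ) : ℚ) • lam j ∈ M (j - 1) := (hkk j h1 h2).1.2
    rw [hM (j - 1)] at hmem
    obtain ⟨v, cc, hvc⟩ := memClosure_rep lam hmem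
    have hkey : (kk j : ℚ) • gam s j
        = ((kk j : ℤ) : ℚ) • (gam s j - (e s : ℚ) • lam j)
          + (e s : ℚ) • (((kk j : ℕ) : ℚ) • lam j) := by
      push_cast
      module
    rw [hkey, hvc, smul_add, Finset.smul_sum]
    refine repL_add (repL_zsmul _ (hD j h1 h2)) (repL_add ?_ ?_)
    · have hv : (e s : ℚ) • (fun l => (v l : ℚ)) = fun l => (v l : ℚ) * (e s : ℚ) := by
        funext t; simp [mul_comm]
      rw [hv]
      exact repL_intvec _ _ _ v
    · refine repL_sum _ _ fun l hl => ?_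
      simp only [Finset.mem_Icc] at hl
      have hc : (e s : ℚ) • (cc l • lam l) = ((cc l : ℤ) : ℚ) • ((e s : ℚ) • lam l) := by
        rw [Int.cast_smul_eq_zsmul]
        exact smul_comm _ _ _
      rw [hc]
      exact repL_zsmul _ (repL_mono (by omega) (hA l hl.1 (by omega)))
  have hClaim : ∀ m, m ≤ s → ∀ a, RepL n (e s : ℚ) (gam s) m a →
      ∃ (α : Fin n → ℤ) (β : ℕ → ℤ),
        (∀ j ∈ Finset.Icc 1 m, 0 ≤ β j ∧ β j ≤ (kk j : ℤ) - 1) ∧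
        a = (∑ j : Fin n, α j • Pi.single j (e s : ℚ)) +
          ∑ j ∈ Finset.Icc 1 m, β j • gam s j := by
    intro m
    induction m with
    | zero =>
      rintro _ a ⟨α, β, hab⟩
      exact ⟨α, β, by simp, hab⟩
    | succ m ih =>
      rintro hms a ⟨α, β, hab⟩
      have hKpos : (0:ℤ) < (kk (m+1) : ℤ) := by
        exact_mod_cast hkkpos (m+1) (by omega) hms
      obtain ⟨q, r, hr0, hrK, hqr⟩ :
          ∃ q r : ℤ, 0 ≤ r ∧ r < (kk (m+1) : ℤ) ∧ (kk (m+1) : ℤ) * q + r = β (m+1) :=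
        ⟨β (m+1) / (kk (m+1) : ℤ), β (m+1) % (kk (m+1) : ℤ), Int.emod_nonneg _ (by omega),
          Int.emod_lt_of_pos _ hKpos, Int.mul_ediv_add_emod _ _⟩
      have hsplit : Finset.Icc 1 (m+1) = insert (m+1) (Finset.Icc 1 m) := by
        ext x; simp only [Finset.mem_Icc, Finset.mem_insert]; omega
      have hnm : (m+1) ∉ Finset.Icc 1 m := by simp
      have hrepm : RepL n (e s : ℚ) (gam s) m (a - (r : ℚ) • gam s (m+1)) := by
        have hcalc : a - (r : ℚ) • gam s (m+1) =
            ((∑ j : Fin n, α j • Pi.single j (e s : ℚ))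
              + ∑ j ∈ Finset.Icc 1 m, β j • gam s j)
              + (q : ℚ) • ((kk (m+1) : ℚ) • gam s (m+1)) := by
          rw [hab, hsplit, Finset.sum_insert hnm, ← hqr,
            ← Int.cast_smul_eq_zsmul ℚ ((kk (m+1) : ℤ) * q + r)]
          push_cast
          module
        rw [hcalc]
        refine repL_add ⟨α, β, rfl⟩ (repL_zsmul _ ?_)
        have := hB (m+1) (by omega) hms
        simpa using this
      obtain ⟨α', β', hb', heq'⟩ := ih (by omega) _ hrepm
      classical
      refine ⟨α', fun j => if j = m+1 then r else β' j, ?_, ?_⟩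
      · intro j hj
        simp only [Finset.mem_Icc] at hj
        by_cases hje : j = m+1
        · subst hje
          simp only [if_pos rfl]
          exact ⟨hr0, Int.le_sub_one_of_lt hrK⟩
        · simp only [if_neg hje]
          exact hb' j (Finset.mem_Icc.mpr ⟨hj.1, by omega⟩)
      · rw [hsplit, Finset.sum_insert hnm]
        have hrw : ∑ j ∈ Finset.Icc 1 m, (if j = m+1 then r else β' j) • gam s j
            = ∑ j ∈ Finset.Icc 1 m, β' j • gam s j := by
          refine Finset.sum_congr rfl fun j hj => ?_
          simp only [Finset.mem_Icc] at hj
          rw [if_neg (by omega)]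
        have ha2 : a = ((∑ j : Fin n, α' j • Pi.single j (e s : ℚ))
            + ∑ j ∈ Finset.Icc 1 m, β' j • gam s j) + (r : ℚ) • gam s (m+1) :=
          sub_eq_iff_eq_add.mp heq'
        simp only [if_pos rfl]
        rw [hrw, ha2, Int.cast_smul_eq_zsmul ℚ r]
        abel
  intro i hi1 his a ha
  have hrep : RepL n (e s : ℚ) (gam s) i a := by
    induction ha using AddSubgroup.closure_induction with
    | mem x hx =>
      rcases hx with ⟨j, rfl⟩ | ⟨j, hj, rfl⟩
      · exact repL_single _ _ _ j
      · exact repL_gam _ _ hj.1 hj.2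
    | zero => exact repL_zero _ _ _ _
    | add x y _ _ ihx ihy => exact repL_add ihx ihy
    | neg x _ ihx => exact repL_neg ihx
  obtain ⟨α, β, hb, heq⟩ := hClaim i his a hrep
  refine ⟨α, β, hb, heq, ?_⟩
  intro hge t
  have h1 : (∑ j : Fin n, α j • Pi.single j (e s : ℚ)) t = (α t : ℚ) * (e s : ℚ) := by
    rw [Finset.sum_apply]
    simp [Pi.single_apply, smul_ite, Finset.sum_ite_eq, zsmul_eq_mul]
  have h2 : (∑ j ∈ Finset.Icc 1 i, β j • gam s j) t
      = ∑ j ∈ Finset.Icc 1 i, (β j : ℚ) * gam s j t := by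
    rw [Finset.sum_apply]
    simp [zsmul_eq_mul]
  have h3 : (∑ j ∈ Finset.Icc 1 i, ((kk j : ℚ) - 1) • gam s j) t
      = ∑ j ∈ Finset.Icc 1 i, ((kk j : ℚ) - 1) * gam s j t := by
    rw [Finset.sum_apply]
    simp
  have hat : a t = (α t : ℚ) * (e s : ℚ) + ∑ j ∈ Finset.Icc 1 i, (β j : ℚ) * gam s j t := by
    rw [heq]
    simp only [Pi.add_apply]
    rw [h1, h2]
  have hge' := Pi.le_def.mp hge t
  rw [h3] at hge'
  have hβle : ∀ j ∈ Finset.Icc 1 i, (β j : ℚ) * gam s j t ≤ ((kk j : ℚ) - 1) * gam s j t := by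
    intro j hj
    have hbj := hb j hj
    have hjm := Finset.mem_Icc.mp hj
    have hg := hgamnn j hjm.1 (le_trans hjm.2 his) t
    refine mul_le_mul_of_nonneg_right ?_ hg
    exact_mod_cast hbj.2
  have hs1 : ∑ j ∈ Finset.Icc 1 i, (β j : ℚ) * gam s j t
      ≤ ∑ j ∈ Finset.Icc 1 i, ((kk j : ℚ) - 1) * gam s j t := Finset.sum_le_sum hβle
  have key : (0:ℚ) ≤ (α t : ℚ) * (e s : ℚ) := by linarith
  have : (0:ℚ) ≤ (α t : ℚ) := by
    by_contra hneg
    push_neg at hneg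
    have := mul_neg_of_neg_of_pos hneg hespos
    linarith
  exact_mod_cast this
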